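/- Let A ∈ R^{n×n} be sign-symmetric (a_{ij}a_{ji} ≥ 0 for all i ≠ j), with influence graph connected, every vertex having at most two neighbors, and ζ(A) even (where ζ counts edges {i,j} with a negative entry). Then there exists a signature matrix S such that all off-diagonal entries of SAS are non-negative, i.e., SAS is Metzler off the diagonal. -/

import Mathlib

/-- The influence graph of a real matrix: an (undirected) edge `{i,j}`, `i ≠ j`,
whenever `A i j ≠ 0` or `A j i ≠ 0`. -/
def infGraph {n : ℕ} (A : Fin n → Fin n → ℝ) : SimpleGraph (Fin n) :=
  SimpleGraph.fromRel (fun i j => A i j ≠ 0 ∨ A j i ≠ 0)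

open Classical in
/-- `ζ(A)`: the number of unordered pairs `{i,j}`, `i ≠ j`, such that
`A i j < 0` or `A j i < 0` (the number of negative edges). -/
noncomputable def zeta {n : ℕ} (A : Fin n → Fin n → ℝ) : ℕ :=
  (Finset.univ.filter (fun p : Fin n × Fin n =>
    p.1 < p.2 ∧ (A p.1 p.2 < 0 ∨ A p.2 p.1 < 0))).card

open Classical in
/-- The number of neighbors of vertex `i` in the influence graph. -/
noncomputable def numNeighbors {n : ℕ} (A : Fin n → Fin n → ℝ) (i : Fin n) : ℕ :=
  (Finset.univ.filter (fun j : Fin n => j ≠ i ∧ (A i j ≠ 0 ∨ A j i ≠ 0))).card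

/- ### Auxiliary material -/

open Finset

section Aux

variable {n : ℕ}

open Classical in
/-- The edge set of the influence graph, as ordered pairs. -/
noncomputable def ES (A : Fin n → Fin n → ℝ) : Finset (Fin n × Fin n) :=
  Finset.univ.filter (fun p : Fin n × Fin n =>
    p.1 < p.2 ∧ (A p.1 p.2 ≠ 0 ∨ A p.2 p.1 ≠ 0))

open Classical in
/-- The incidence set: ordered pairs in both directions. -/
noncomputable def Inc (A : Fin n → Fin n → ℝ) : Finset (Fin n × Fin n) :=
  Finset.univ.filter (fun q : Fin n × Fin n =>
    q.1 ≠ q.2 ∧ (A q.1 q.2 ≠ 0 ∨ A q.2 q.1 ≠ 0))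

open Classical in
/-- The sign of an edge. -/
noncomputable def esgn (A : Fin n → Fin n → ℝ) (p : Fin n × Fin n) : ℝ :=
  if A p.1 p.2 < 0 ∨ A p.2 p.1 < 0 then -1 else 1

/-- ±1 value attached to a boolean. -/
noncomputable def dval (b : Fin n → Bool) (v : Fin n) : ℝ := if b v then 1 else -1

open Classical in
/-- The set of "bad" edges for a given signing. -/
noncomputable def BadE (A : Fin n → Fin n → ℝ) (b : Fin n → Bool) : Finset (Fin n × Fin n) :=
  (ES A).filter (fun p => dval b p.1 * dval b p.2 ≠ esgn A p)

lemma mem_ES {A : Fin n → Fin n → ℝ} {p : Fin n × Fin n} :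
    p ∈ ES A ↔ p.1 < p.2 ∧ (A p.1 p.2 ≠ 0 ∨ A p.2 p.1 ≠ 0) := by
  simp [ES]

lemma mem_Inc {A : Fin n → Fin n → ℝ} {q : Fin n × Fin n} :
    q ∈ Inc A ↔ q.1 ≠ q.2 ∧ (A q.1 q.2 ≠ 0 ∨ A q.2 q.1 ≠ 0) := by
  simp [Inc]

lemma mem_BadE {A : Fin n → Fin n → ℝ} {b : Fin n → Bool} {p : Fin n × Fin n} :
    p ∈ BadE A b ↔ p ∈ ES A ∧ dval b p.1 * dval b p.2 ≠ esgn A p := by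
  simp [BadE]

lemma dval_pm (b : Fin n → Bool) (v : Fin n) : dval b v = 1 ∨ dval b v = -1 := by
  unfold dval; split <;> simp

lemma esgn_pm (A : Fin n → Fin n → ℝ) (p : Fin n × Fin n) : esgn A p = 1 ∨ esgn A p = -1 := by
  unfold esgn; split <;> simp

lemma pm_mul_pm {a c : ℝ} (ha : a = 1 ∨ a = -1) (hc : c = 1 ∨ c = -1) :
    a * c = 1 ∨ a * c = -1 := by
  rcases ha with h | h <;> rcases hc with h' | h' <;> simp [h, h']

lemma pm_mul_ne {a c : ℝ} (ha : a = 1 ∨ a = -1) (hc : c = 1 ∨ c = -1) (h : a ≠ c) :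
    a * c = -1 := by
  rcases ha with h1 | h1 <;> rcases hc with h2 | h2 <;> simp_all

lemma pm_ne_eq_neg {a c : ℝ} (ha : a = 1 ∨ a = -1) (hc : c = 1 ∨ c = -1) (h : a ≠ c) :
    a = -c := by
  rcases ha with h1 | h1 <;> rcases hc with h2 | h2 <;> simp_all

/-- Reachability transfers along a map that sends edges to reachability. -/
lemma reach_mono {V : Type*} {G H : SimpleGraph V}
    (h : ∀ a b, G.Adj a b → H.Reachable a b) {u v : V} (hr : G.Reachable u v) :
    H.Reachable u v := by
  obtain ⟨w⟩ := hr
  induction w with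
  | nil => exact SimpleGraph.Reachable.refl _
  | cons ha _ ih => exact (h _ _ ha).trans ih

/-- A connected graph on a finite vertex type has at least `card V - 1` edges. -/
lemma conn_card_le {V : Type*} [Fintype V] [DecidableEq V] (G : SimpleGraph V)
    [Fintype G.edgeSet] (h : G.Connected) : Fintype.card V ≤ G.edgeFinset.card + 1 := by
  classical
  obtain ⟨r⟩ := h.nonempty
  have key : ∀ v : V, v ≠ r → ∃ w, G.Adj v w ∧ G.dist w r < G.dist v r := by
    intro v hv
    obtain ⟨p, hp⟩ := (h v r).exists_walk_length_eq_dist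
    cases p with
    | nil => exact absurd rfl hv
    | @cons _ w _ hadj q =>
      refine ⟨w, hadj, ?_⟩
      have h1 : G.dist w r ≤ q.length := SimpleGraph.dist_le q
      have h2 : q.length + 1 = G.dist v r := by
        simpa [SimpleGraph.Walk.length_cons] using hp
      omega
  set f : V → V := fun v => if hv : v ≠ r then Classical.choose (key v hv) else v with hf
  have hfspec : ∀ v, v ≠ r → G.Adj v (f v) ∧ G.dist (f v) r < G.dist v r := by
    intro v hv
    simp only [hf, dif_pos hv]
    exact Classical.choose_spec (key v hv)
  have hinj : Set.InjOn (fun v => s(v, f v)) (Finset.univ.erase r) := by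
    intro x hx y hy hxy
    have hxr : x ≠ r := by simpa using hx
    have hyr : y ≠ r := by simpa using hy
    rcases Sym2.eq_iff.mp hxy with ⟨h1, _⟩ | ⟨h1, h2⟩
    · exact h1
    · exfalso
      have d1 := (hfspec x hxr).2
      have d2 := (hfspec y hyr).2
      rw [← h1] at d2
      rw [h2] at d1
      omega
  have hmaps : ∀ v ∈ Finset.univ.erase r, s(v, f v) ∈ G.edgeFinset := by
    intro v hv
    rw [SimpleGraph.mem_edgeFinset, SimpleGraph.mem_edgeSet]
    exact (hfspec v (Finset.mem_erase.mp hv).1).1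
  have hcard := Finset.card_le_card_of_injOn _ hmaps hinj
  rw [Finset.card_erase_of_mem (Finset.mem_univ r), Finset.card_univ] at hcard
  omega

end Aux

section Count

variable {n : ℕ} (A : Fin n → Fin n → ℝ)

open Classical

lemma Inc_filter_lt : (Inc A).filter (fun q => q.1 < q.2) = ES A := by
  ext p
  simp only [mem_filter, mem_Inc, mem_ES]
  constructor
  · rintro ⟨⟨_, h2⟩, h3⟩; exact ⟨h3, h2⟩
  · rintro ⟨h1, h2⟩; exact ⟨⟨ne_of_lt h1, h2⟩, h1⟩

lemma Inc_filter_not_lt :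
    (Inc A).filter (fun q => ¬ q.1 < q.2) = (ES A).image Prod.swap := by
  ext p
  simp only [mem_filter, mem_Inc, mem_image, mem_ES]
  constructor
  · rintro ⟨⟨h1, h2⟩, h3⟩
    refine ⟨(p.2, p.1), ⟨?_, ?_⟩, ?_⟩
    · exact lt_of_le_of_ne (not_lt.mp h3) (Ne.symm h1)
    · tauto
    · simp [Prod.swap]
  · rintro ⟨q, ⟨h1, h2⟩, rfl⟩
    refine ⟨⟨?_, ?_⟩, ?_⟩
    · exact ne_of_gt h1
    · tauto
    · exact not_lt.mpr (le_of_lt h1)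

lemma card_Inc : (Inc A).card = 2 * (ES A).card := by
  have h := Finset.card_filter_add_card_filter_not
    (s := Inc A) (p := fun q => q.1 < q.2)
  rw [Inc_filter_lt, Inc_filter_not_lt,
    Finset.card_image_of_injective _ Prod.swap_injective] at h
  omega

lemma card_fiber (v : Fin n) :
    ((Inc A).filter (fun q => q.1 = v)).card = numNeighbors A v := by
  apply Finset.card_bij (fun q _ => q.2)
  · intro q hq
    simp only [mem_filter, mem_Inc] at hq
    obtain ⟨⟨h1, h2⟩, h3⟩ := hq
    subst h3
    simp only [numNeighbors, mem_filter, mem_univ, true_and]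
    exact ⟨Ne.symm h1, h2⟩
  · intro q1 hq1 q2 hq2 he
    simp only [mem_filter] at hq1 hq2
    exact Prod.ext (hq1.2.trans hq2.2.symm) he
  · intro j hj
    simp only [numNeighbors, mem_filter, mem_univ, true_and] at hj
    exact ⟨(v, j), Finset.mem_filter.mpr ⟨mem_Inc.mpr ⟨Ne.symm hj.1, hj.2⟩, rfl⟩, rfl⟩

lemma sum_deg : 2 * (ES A).card = ∑ v, numNeighbors A v := by
  rw [← card_Inc]
  rw [Finset.card_eq_sum_card_fiberwise (f := Prod.fst) (t := Finset.univ)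
    (fun q _ => mem_univ q.1)]
  exact Finset.sum_congr rfl fun v _ => card_fiber A v

lemma prod_fiber (d : Fin n → ℝ) :
    ∏ q ∈ Inc A, d q.1 = ∏ v, d v ^ numNeighbors A v := by
  rw [← Finset.prod_fiberwise_of_maps_to (g := Prod.fst) (t := Finset.univ)
    (fun q _ => mem_univ q.1) (fun q => d q.1)]
  refine Finset.prod_congr rfl fun v _ => ?_
  rw [← card_fiber A v, ← Finset.prod_const]
  refine Finset.prod_congr rfl fun q hq => ?_
  rw [(Finset.mem_filter.mp hq).2]

lemma prod_edges (d : Fin n → ℝ) :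
    ∏ p ∈ ES A, (d p.1 * d p.2) = ∏ v, d v ^ numNeighbors A v := by
  rw [← prod_fiber A d]
  have h := Finset.prod_filter_mul_prod_filter_not (Inc A) (fun q => q.1 < q.2)
    (fun q => d q.1)
  rw [Inc_filter_lt, Inc_filter_not_lt,
    Finset.prod_image (fun x _ y _ h => Prod.swap_injective h)] at h
  rw [← h, ← Finset.prod_mul_distrib]
  rfl

lemma zeta_eq : ((ES A).filter (fun p => A p.1 p.2 < 0 ∨ A p.2 p.1 < 0)).card = zeta A := by
  congr 1
  ext p
  simp only [mem_filter, mem_ES, zeta, mem_univ, true_and]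
  constructor
  · rintro ⟨⟨h1, _⟩, h3⟩; exact ⟨h1, h3⟩
  · rintro ⟨h1, h2⟩
    refine ⟨⟨h1, ?_⟩, h2⟩
    rcases h2 with h | h
    · exact Or.inl (ne_of_lt h)
    · exact Or.inr (ne_of_lt h)

end Count

/-- If `A` is sign-symmetric with connected influence graph, every vertex has
at most two neighbors, and `ζ(A)` is even, then there is a signature matrix `S`
such that `SAS` has all off-diagonal entries non-negative. -/
theorem stmt15 (n : ℕ) (A : Fin n → Fin n → ℝ)
    (hss : ∀ i j : Fin n, i ≠ j → 0 ≤ A i j * A j i)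
    (hconn : (infGraph A).Connected)
    (hdeg : ∀ i, numNeighbors A i ≤ 2)
    (hz : Even (zeta A)) :
    ∃ d : Fin n → ℝ, (∀ i, d i = 1 ∨ d i = -1) ∧
      ∀ i j : Fin n, i ≠ j → 0 ≤ d i * d j * A i j := by
  classical
  -- choose a signing minimizing the number of bad edges
  obtain ⟨b, -, hbmin⟩ := Finset.exists_min_image (Finset.univ : Finset (Fin n → Bool))
    (fun b => (BadE A b).card) Finset.univ_nonempty
  set d := dval b with hd
  by_cases hB : BadE A b = ∅
  · -- the good case: no bad edges, `d` works
    refine ⟨d, fun i => dval_pm b i, ?_⟩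
    have key : ∀ x y : Fin n, x < y → 0 ≤ d x * d y * A x y ∧ 0 ≤ d x * d y * A y x := by
      intro x y hxy
      by_cases hp : (x, y) ∈ ES A
      · have hnb : (x, y) ∉ BadE A b := by rw [hB]; exact notMem_empty _
        rw [mem_BadE, not_and, not_not] at hnb
        have heq : d x * d y = esgn A (x, y) := hnb hp
        by_cases hneg : A x y < 0 ∨ A y x < 0
        · have hs : esgn A (x, y) = -1 := by simp [esgn, hneg]
          have hprod := hss x y (ne_of_lt hxy)
          have hxy0 : A x y ≤ 0 ∧ A y x ≤ 0 := by
            rcases hneg with h | h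
            · constructor
              · exact le_of_lt h
              · nlinarith
            · constructor
              · nlinarith
              · exact le_of_lt h
          rw [heq, hs]
          constructor <;> nlinarith [hxy0.1, hxy0.2]
        · push_neg at hneg
          have hs : esgn A (x, y) = 1 := by simp [esgn, hneg.1.not_gt, hneg.2.not_gt]
          rw [heq, hs]
          constructor <;> [nlinarith [not_lt.mp hneg.1.not_gt]; skip]
          all_goals nlinarith [not_lt.mp hneg.1.not_gt, not_lt.mp hneg.2.not_gt]
      · rw [mem_ES] at hp
        push_neg at hp
        obtain ⟨h1, h2⟩ := hp hxy
        rw [h1, h2]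
        simp
    intro i j hij
    rcases hij.lt_or_gt with h | h
    · exact (key i j h).1
    · have := (key j i h).2
      calc (0:ℝ) ≤ d j * d i * A i j := this
        _ = d i * d j * A i j := by ring
  · -- bad edges exist: derive a contradiction
    exfalso
    have hBne : (BadE A b).Nonempty := Finset.nonempty_iff_ne_empty.mpr hB
    set B := BadE A b with hBdef
    -- the graph of good edges
    set G' : SimpleGraph (Fin n) :=
      SimpleGraph.fromRel (fun i j => (i, j) ∈ ES A \ B) with hG'
    have hAdj : ∀ x y, G'.Adj x y ↔ x ≠ y ∧ ((x, y) ∈ ES A \ B ∨ (y, x) ∈ ES A \ B) := by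
      intro x y
      rw [hG', SimpleGraph.fromRel_adj]
    have hEB : ∀ {p : Fin n × Fin n}, p ∈ ES A \ B → G'.Adj p.1 p.2 := by
      intro p hp
      have hpe := (Finset.mem_sdiff.mp hp).1
      exact (hAdj _ _).mpr ⟨ne_of_lt (mem_ES.mp hpe).1, Or.inl (by simpa using hp)⟩
    by_cases hreach : ∀ p ∈ B, G'.Reachable p.1 p.2
    · -- case 2: all bad edges have reachable endpoints in G'; counting contradiction
      have hadjreach : ∀ x y : Fin n, (infGraph A).Adj x y → G'.Reachable x y := by
        intro x y hxy
        rw [infGraph, SimpleGraph.fromRel_adj] at hxy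
        obtain ⟨hne, hor⟩ := hxy
        have hor' : A x y ≠ 0 ∨ A y x ≠ 0 := by tauto
        rcases hne.lt_or_gt with h | h
        · have hpE : (x, y) ∈ ES A := mem_ES.mpr ⟨h, hor'⟩
          by_cases hb : (x, y) ∈ B
          · exact hreach (x, y) hb
          · exact (hEB (Finset.mem_sdiff.mpr ⟨hpE, hb⟩)).reachable
        · have hpE : (y, x) ∈ ES A := mem_ES.mpr ⟨h, by tauto⟩
          by_cases hb : (y, x) ∈ B
          · exact (hreach (y, x) hb).symm
          · exact ((hEB (Finset.mem_sdiff.mpr ⟨hpE, hb⟩)).reachable).symm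
      have : Nonempty (Fin n) := hconn.nonempty
      have hG'conn : G'.Connected :=
        SimpleGraph.Connected.mk (fun u v => reach_mono hadjreach (hconn.preconnected u v))
      have instE : Fintype G'.edgeSet := Set.Finite.fintype (Set.toFinite _)
      -- edge count of G'
      have hcard : G'.edgeFinset.card = (ES A \ B).card := by
        symm
        apply Finset.card_bij (fun p _ => s(p.1, p.2))
        · intro p hp
          rw [SimpleGraph.mem_edgeFinset, SimpleGraph.mem_edgeSet]
          exact hEB hp
        · intro p hp q hq he
          have hpe := (Finset.mem_sdiff.mp hp).1
          have hqe := (Finset.mem_sdiff.mp hq).1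
          have hp1 := (mem_ES.mp hpe).1
          have hq1 := (mem_ES.mp hqe).1
          rcases Sym2.eq_iff.mp he with ⟨h1, h2⟩ | ⟨h1, h2⟩
          · exact Prod.ext h1 h2
          · exfalso
            rw [← h1, ← h2] at hq1
            exact absurd hq1 (not_lt.mpr (le_of_lt hp1))
        · intro e he
          induction e using Sym2.ind with
          | _ x y =>
            rw [SimpleGraph.mem_edgeFinset, SimpleGraph.mem_edgeSet, hAdj] at he
            rcases he.2 with h | h
            · exact ⟨(x, y), h, rfl⟩
            · exact ⟨(y, x), h, Sym2.eq_swap⟩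
      have h1 : n ≤ (ES A \ B).card + 1 := by
        have := conn_card_le G' hG'conn
        rwa [Fintype.card_fin, hcard] at this
      have hBE : B ⊆ ES A := Finset.filter_subset _ _
      have h2 : (ES A \ B).card + B.card = (ES A).card :=
        Finset.card_sdiff_add_card_eq_card hBE
      have h3 : 2 * (ES A).card = ∑ v, numNeighbors A v := sum_deg A
      have h4 : ∑ v, numNeighbors A v ≤ 2 * n := by
        calc ∑ v, numNeighbors A v ≤ ∑ _v : Fin n, 2 :=
              Finset.sum_le_sum (fun i _ => hdeg i)
          _ = 2 * n := by simp [Finset.sum_const, Finset.card_univ, Nat.mul_comm]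
      have hB1 : 1 ≤ B.card := Finset.card_pos.mpr hBne
      have hBcard : B.card = 1 := by omega
      have hES : (ES A).card = n := by omega
      have hsum2 : ∑ v, numNeighbors A v = 2 * n := by omega
      have hdeg2 : ∀ v, numNeighbors A v = 2 := by
        intro v
        by_contra hv
        have hlt : numNeighbors A v < 2 := lt_of_le_of_ne (hdeg v) hv
        have := Finset.sum_lt_sum (f := fun v => numNeighbors A v) (g := fun _ => 2)
          (fun i (_ : i ∈ Finset.univ) => hdeg i) ⟨v, Finset.mem_univ v, hlt⟩
        rw [hsum2] at this
        simp only [Finset.sum_const, Finset.card_univ, smul_eq_mul, Fintype.card_fin] at this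
        omega
      -- the product identity
      have hP1 : ∏ p ∈ ES A, (d p.1 * d p.2 * esgn A p) = (-1 : ℝ) ^ B.card := by
        rw [← Finset.prod_filter_mul_prod_filter_not (ES A)
          (fun p => d p.1 * d p.2 ≠ esgn A p)]
        have e1 : (ES A).filter (fun p => d p.1 * d p.2 ≠ esgn A p) = B := by
          rw [hBdef]; rfl
        have e2 : ∏ p ∈ B, (d p.1 * d p.2 * esgn A p) = (-1 : ℝ) ^ B.card := by
          rw [← Finset.prod_const]
          refine Finset.prod_congr rfl fun p hp => ?_
          have hne := (mem_BadE.mp hp).2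
          exact pm_mul_ne (pm_mul_pm (dval_pm b p.1) (dval_pm b p.2)) (esgn_pm A p) hne
        have e3 : ∏ p ∈ (ES A).filter (fun p => ¬ d p.1 * d p.2 ≠ esgn A p),
            (d p.1 * d p.2 * esgn A p) = 1 := by
          apply Finset.prod_eq_one
          intro p hp
          have heq : d p.1 * d p.2 = esgn A p := not_not.mp (Finset.mem_filter.mp hp).2
          rw [heq]
          rcases esgn_pm A p with h | h <;> rw [h] <;> norm_num
        rw [e1, e2, e3, mul_one]
      have hP3 : ∏ p ∈ ES A, esgn A p = 1 := by
        rw [← Finset.prod_filter_mul_prod_filter_not (ES A)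
          (fun p => A p.1 p.2 < 0 ∨ A p.2 p.1 < 0)]
        have e2 : ∏ p ∈ (ES A).filter (fun p => A p.1 p.2 < 0 ∨ A p.2 p.1 < 0),
            esgn A p = (-1 : ℝ) ^ zeta A := by
          rw [← zeta_eq A, ← Finset.prod_const]
          refine Finset.prod_congr rfl fun p hp => ?_
          simp [esgn, (Finset.mem_filter.mp hp).2]
        have e3 : ∏ p ∈ (ES A).filter (fun p => ¬ (A p.1 p.2 < 0 ∨ A p.2 p.1 < 0)),
            esgn A p = 1 := by
          apply Finset.prod_eq_one
          intro p hp
          simp [esgn, (Finset.mem_filter.mp hp).2]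
        rw [e2, e3, mul_one, hz.neg_one_pow]
      have hP4 : ∏ p ∈ ES A, (d p.1 * d p.2) = 1 := by
        rw [prod_edges A d]
        apply Finset.prod_eq_one
        intro v _
        rw [hdeg2 v]
        rcases dval_pm b v with h | h <;> rw [hd] at * <;> rw [h] <;> norm_num
      have hsplit : ∏ p ∈ ES A, (d p.1 * d p.2 * esgn A p)
          = (∏ p ∈ ES A, (d p.1 * d p.2)) * ∏ p ∈ ES A, esgn A p :=
        Finset.prod_mul_distrib
      rw [hP1, hP3, hP4, one_mul, hBcard] at hsplit
      norm_num at hsplit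
    · -- case 1: some bad edge has unreachable endpoints; flip to reduce bad edges
      push_neg at hreach
      obtain ⟨p, hpB, hpnr⟩ := hreach
      set R : Fin n → Prop := fun v => G'.Reachable p.1 v with hR
      set b' : Fin n → Bool := fun v => if R v then !(b v) else b v with hb'
      have hd' : ∀ v, dval b' v = if R v then -d v else d v := by
        intro v
        by_cases h : R v <;> simp only [dval, hb', h, if_pos, if_neg, hd] <;>
          cases hbv : b v <;> simp [h, hbv]
      have hRadj : ∀ x y, G'.Adj x y → (R x ↔ R y) := by
        intro x y hxy
        constructor
        · intro hx; exact hx.trans hxy.reachable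
        · intro hy; exact hy.trans hxy.symm.reachable
      have hsub : BadE A b' ⊆ B.erase p := by
        intro q hq
        rw [mem_BadE] at hq
        obtain ⟨hqE, hqbad⟩ := hq
        by_cases h12 : R q.1 ↔ R q.2
        · -- both sides agree: badness unchanged
          have hsame : dval b' q.1 * dval b' q.2 = d q.1 * d q.2 := by
            rw [hd', hd']
            by_cases h1 : R q.1
            · rw [if_pos h1, if_pos (h12.mp h1)]; ring
            · rw [if_neg h1, if_neg (fun h2 => h1 (h12.mpr h2))]
          have hqB : q ∈ B := mem_BadE.mpr ⟨hqE, by rwa [hsame] at hqbad⟩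
          refine Finset.mem_erase.mpr ⟨?_, hqB⟩
          rintro rfl
          exact hpnr (h12.mp (SimpleGraph.Reachable.refl _))
        · -- crossing edge
          have hcross : dval b' q.1 * dval b' q.2 = -(d q.1 * d q.2) := by
            rw [hd', hd']
            by_cases h1 : R q.1
            · have h2 : ¬ R q.2 := fun h2 => h12 ⟨fun _ => h2, fun _ => h1⟩
              rw [if_pos h1, if_neg h2]; ring
            · have h2 : R q.2 := by
                by_contra h2
                exact h12 ⟨fun h => absurd h h1, fun h => absurd h h2⟩
              rw [if_neg h1, if_pos h2]; ring
          have hqB : q ∈ B := by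
            by_contra hqB
            have hadj : G'.Adj q.1 q.2 := hEB (Finset.mem_sdiff.mpr ⟨hqE, hqB⟩)
            exact h12 (hRadj _ _ hadj)
          refine Finset.mem_erase.mpr ⟨?_, hqB⟩
          rintro rfl
          -- q = p : but then p is no longer bad
          have hpb := (mem_BadE.mp hpB).2
          have heq : d q.1 * d q.2 = -(esgn A q) :=
            pm_ne_eq_neg (pm_mul_pm (dval_pm b q.1) (dval_pm b q.2)) (esgn_pm A q) hpb
          rw [hcross, heq, neg_neg] at hqbad
          exact hqbad rfl
      have hlt : (BadE A b').card < B.card := by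
        have h1 := Finset.card_le_card hsub
        rw [Finset.card_erase_of_mem hpB] at h1
        have h2 : 1 ≤ B.card := Finset.card_pos.mpr hBne
        omega
      have := hbmin b' (Finset.mem_univ _)
      omega
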